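/- Over Σ = {1,2,3}, define the finite-state endomorphisms a and b by a(1u) = 1u, a(2u) = 1u, a(3u) = 2·a(u), and b(1u) = 2·a(u), b(2u) = 3u, b(3u) = 1·b(u), for all u ∈ Σ*. Then b has index 8 and period 3: b^8 = b^{11}; the least p ≥ 1 such that b^i = b^{i+p} for some i ≥ 1 is p = 3; and the least i ≥ 1 with b^i = b^{i+3} is i = 8. -/
import Mathlib


open Filter Topology

namespace AutHier

variable {A : Type*}

/-- The section (state) `f|_u` of a transformation `f : Σ* → Σ*` at the word `u`. -/
def sec (f : List A → List A) (u : List A) : List A → List A :=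
  fun v => (f (u ++ v)).drop u.length

/-- `f` is an endomorphism of `Σ*`: it preserves lengths and prefixes. -/
def IsEnd (f : List A → List A) : Prop :=
  (∀ u, (f u).length = u.length) ∧ ∀ u v, f u <+: f (u ++ v)

/-- `f` is a finite-state endomorphism of `Σ*` (an element of `FEnd(Σ*)`). -/
def IsFEnd (f : List A → List A) : Prop :=
  IsEnd f ∧ {g | ∃ u, g = sec f u}.Finite

/-- The activity `α_f(n)` of a transformation `f`:
the number of words `v` of length `n` which are images of some word `u`
of length `n` whose section `f|_u` is nontrivial. -/
noncomputable def activity (f : List A → List A) (n : ℕ) : ℕ :=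
  Set.ncard {v : List A | v.length = n ∧
    ∃ u : List A, u.length = n ∧ sec f u ≠ id ∧ f u = v}

/-- The class `SP(d)` of finite-state endomorphisms of
polynomial activity of degree at most `d`. -/
def SP (A : Type*) (d : ℤ) : Set (List A → List A) :=
  {t | IsFEnd t ∧
    Tendsto (fun n : ℕ => (activity t n : ℝ) / (n : ℝ) ^ (d + 1)) atTop (𝓝 0)}

/-- The class `SE(l)` of finite-state endomorphisms of
exponential activity of growth rate at most `l`. -/
def SE (A : Type*) (l : ℝ) : Set (List A → List A) :=
  {t | IsFEnd t ∧
    limsup (fun n : ℕ => Real.log (activity t n) / (n : ℝ)) atTop ≤ l}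

/-- The stateset `Q'(t)` of the pruned automaton: all sections of `t` except `id`. -/
def Qp (t : List A → List A) : Set (List A → List A) :=
  {g | ∃ u, g = sec t u} \ {id}

/-- One-letter transition of the determinized pruned output automaton of `t`. -/
def delta (t : List A → List A) (S : Set (List A → List A)) (y : A) :
    Set (List A → List A) :=
  {s' | s' ∈ Qp t ∧ ∃ s ∈ S, ∃ x : A, s [x] = [y] ∧ sec s [x] = s'}

/-- Extended transition function `δ*` of the determinized pruned output automaton. -/
def deltaStar (t : List A → List A) (S : Set (List A → List A)) (v : List A) :
    Set (List A → List A) :=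
  v.foldl (delta t) S

/-- There is a chain of `k` cycles in the determinized pruned output automaton of `t`. -/
def ChainOfCycles (t : List A → List A) (k : ℕ) : Prop :=
  ∃ (S : Fin k → Set (List A → List A)) (c : Fin k → List A),
    (∀ i, S i ≠ ∅) ∧ (∀ i, c i ≠ []) ∧
    (∀ h : 0 < k, ∃ v, deltaStar t {t} v = S ⟨0, h⟩) ∧
    (∀ i, deltaStar t (S i) (c i) = S i) ∧
    (∀ (i : Fin k) (h : (i : ℕ) + 1 < k),
      (∃ v, deltaStar t (S i) v = S ⟨(i : ℕ) + 1, h⟩) ∧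
      ¬ (∃ v, deltaStar t (S ⟨(i : ℕ) + 1, h⟩) v = S i))

/-- The edge relation of the orbit signalizer graph `Φ`: from the vertex `v = (s,t)`,
reading the letter `x`, with label `(x; m, ℓ)` where `m, ℓ` are the minimal integers
(`ℓ ≥ 1`) with `(s t^{m+ℓ})·x = (s t^m)·x`, the edge goes to
`v' = (r|_x, (t^ℓ)|_{r·x})` where `r = s t^m`. -/
def OSStep (v : (List A → List A) × (List A → List A)) (x : A) (m ℓ : ℕ)
    (v' : (List A → List A) × (List A → List A)) : Prop :=
  1 ≤ ℓ ∧ v.2^[m + ℓ] (v.1 [x]) = v.2^[m] (v.1 [x]) ∧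
  (∀ m' ℓ' : ℕ, 1 ≤ ℓ' → v.2^[m' + ℓ'] (v.1 [x]) = v.2^[m'] (v.1 [x]) → m ≤ m') ∧
  (∀ ℓ' : ℕ, 1 ≤ ℓ' → v.2^[m + ℓ'] (v.1 [x]) = v.2^[m] (v.1 [x]) → ℓ ≤ ℓ') ∧
  v' = (sec (v.2^[m] ∘ v.1) [x], sec (v.2^[ℓ]) ((v.2^[m] ∘ v.1) [x]))

/-- A walk of length `n` in the orbit signalizer graph `Φ`. -/
structure OSPath (A : Type*) (n : ℕ) where
  vert : Fin (n + 1) → (List A → List A) × (List A → List A)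
  lett : Fin n → A
  idx : Fin n → ℕ
  per : Fin n → ℕ
  step : ∀ k : Fin n, OSStep (vert k.castSucc) (lett k) (idx k) (per k) (vert k.succ)

/-- The inf-index-cost `i⁻(π)` of a walk with indices `idx` and periods `per`. -/
def iminusCost {n : ℕ} (idx per : Fin n → ℕ) : ℕ :=
  ∑ k : Fin n, if idx k = 0 then 0
    else (idx k - 1) * (∏ j ∈ Finset.univ.filter (· < k), per j) + 1

/-- The sup-index-cost `i⁺(π)` of a walk with indices `idx` and periods `per`. -/
def iplusCost {n : ℕ} (idx per : Fin n → ℕ) : ℕ :=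
  ∑ k : Fin n, (∏ j ∈ Finset.univ.filter (· < k), per j) * idx k

/-- The period-cost `p(π)` of a walk with periods `per`. -/
def pCost {n : ℕ} (per : Fin n → ℕ) : ℕ :=
  ∏ k : Fin n, per k

/-- The walk `w` starts at the vertex `(id, t)`, i.e. it is a walk in `Φ(t)` from its root. -/
def IsWalkFrom {n : ℕ} (t : List A → List A) (w : OSPath A n) : Prop :=
  w.vert 0 = (id, t)

/-- The vertex `v` is accessible from `(id, t)` in `Φ`, i.e. `v` is a vertex of `Φ(t)`. -/
def OSReach (t : List A → List A) (v : (List A → List A) × (List A → List A)) : Prop :=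
  ∃ n : ℕ, ∃ w : OSPath A n, IsWalkFrom t w ∧ w.vert (Fin.last n) = v

/-- The set of inf-index-costs of walks in `Φ(t)` from `(id, t)`. -/
def IminusCosts (t : List A → List A) : Set ℕ :=
  {c | ∃ n : ℕ, ∃ w : OSPath A n, IsWalkFrom t w ∧ c = iminusCost w.idx w.per}

/-- The set of sup-index-costs of walks in `Φ(t)` from `(id, t)`. -/
def IplusCosts (t : List A → List A) : Set ℕ :=
  {c | ∃ n : ℕ, ∃ w : OSPath A n, IsWalkFrom t w ∧ c = iplusCost w.idx w.per}

/-- The set of period-costs of walks in `Φ(t)` from `(id, t)`. -/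
def PCosts (t : List A → List A) : Set ℕ :=
  {c | ∃ n : ℕ, ∃ w : OSPath A n, IsWalkFrom t w ∧ c = pCost w.per}

/-- `w` is a simple cycle of `Φ(t)`: a closed walk of positive length, lying in `Φ(t)`,
with no repeated vertices. -/
def IsSimpleCycle {n : ℕ} (t : List A → List A) (w : OSPath A n) : Prop :=
  1 ≤ n ∧ OSReach t (w.vert 0) ∧ w.vert (Fin.last n) = w.vert 0 ∧
  ∀ j k : Fin (n + 1), (j : ℕ) < n → (k : ℕ) < n → w.vert j = w.vert k → j = k

/-- The transformation `a` over `Σ = {1,2,3}` (encoded as `Fin 3`, `0 ↦ 1`, `1 ↦ 2`,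
`2 ↦ 3`): `a(1u) = 1u`, `a(2u) = 1u`, `a(3u) = 2·a(u)`. -/
def aF : List (Fin 3) → List (Fin 3)
  | [] => []
  | ⟨0, _⟩ :: u => 0 :: u
  | ⟨1, _⟩ :: u => 0 :: u
  | ⟨_ + 2, _⟩ :: u => 1 :: aF u

/-- The transformation `b` over `Σ = {1,2,3}` (encoded as `Fin 3`):
`b(1u) = 2·a(u)`, `b(2u) = 3u`, `b(3u) = 1·b(u)`. -/
def bF : List (Fin 3) → List (Fin 3)
  | [] => []
  | ⟨0, _⟩ :: u => 1 :: aF u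
  | ⟨1, _⟩ :: u => 2 :: u
  | ⟨_ + 2, _⟩ :: u => 0 :: bF u

/-- `b` has index `8` and period `3`: `b^8 = b^{11}`, the least `p ≥ 1` with
`b^i = b^{i+p}` for some `i ≥ 1` is `3`, and the least `i ≥ 1` with `b^i = b^{i+3}`
is `8`. -/
lemma aF3 (u : List (Fin 3)) : aF (aF (aF u)) = aF (aF u) := by
  rcases u with _ | ⟨⟨(_|_|_|n), hx⟩, v⟩
  · rfl
  · rfl
  · rfl
  · rfl
  · omega

lemma key (u : List (Fin 3)) :
    bF (aF (bF (aF (bF (aF u))))) = bF (aF (bF (aF u))) := by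
  rcases u with _ | ⟨⟨(_|_|_|n), hx⟩, v⟩
  · rfl
  · show (1 : Fin 3) :: aF (aF (aF v)) = 1 :: aF (aF v)
    rw [aF3]
  · show (1 : Fin 3) :: aF (aF (aF v)) = 1 :: aF (aF v)
    rw [aF3]
  · show (2 : Fin 3) :: aF (aF (aF v)) = 2 :: aF (aF v)
    rw [aF3]
  · omega

theorem bF_index_period :
    bF^[8] = bF^[11] ∧
    IsLeast {p : ℕ | 1 ≤ p ∧ ∃ i : ℕ, 1 ≤ i ∧ bF^[i] = bF^[i + p]} 3 ∧
    IsLeast {i : ℕ | 1 ≤ i ∧ bF^[i] = bF^[i + 3]} 8 := by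
  have h811 : bF^[8] = bF^[11] := by
    funext u
    rcases u with _ | ⟨⟨(_|_|_|n), hx⟩, v⟩
    · rfl
    · show (2 : Fin 3) :: aF (bF (aF (bF (aF v)))) =
        (2 : Fin 3) :: aF (bF (aF (bF (aF (bF (aF v))))))
      rw [key]
    · show (0 : Fin 3) :: bF (aF (bF (aF (bF v)))) =
        (0 : Fin 3) :: bF (aF (bF (aF (bF (aF (bF v))))))
      rw [key]
    · show (1 : Fin 3) :: aF (bF (aF (bF (aF (bF v))))) =
        (1 : Fin 3) :: aF (bF (aF (bF (aF (bF (aF (bF v)))))))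
      rw [key]
    · omega
  have single : ∀ i : ℕ, bF^[i] [(0 : Fin 3)] = [0] ∨
      bF^[i] [(0 : Fin 3)] = [1] ∨ bF^[i] [(0 : Fin 3)] = [2] := by
    intro i
    induction i with
    | zero => left; rfl
    | succ k ih =>
      rw [Function.iterate_succ_apply']
      rcases ih with h | h | h <;> rw [h]
      · right; left; rfl
      · right; right; rfl
      · left; rfl
  refine ⟨h811, ⟨⟨by norm_num, 8, by norm_num, h811⟩, ?_⟩,
    ⟨⟨by norm_num, h811⟩, ?_⟩⟩
  · rintro p ⟨hp1, i, hi1, hip⟩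
    by_contra hlt
    push_neg at hlt
    have h0 := congrFun hip [(0 : Fin 3)]
    interval_cases p
    · rw [Function.iterate_succ_apply'] at h0
      rcases single i with h | h | h <;> rw [h] at h0 <;> exact absurd h0 (by decide)
    · rw [show i + 2 = (i + 1) + 1 from rfl, Function.iterate_succ_apply',
        Function.iterate_succ_apply'] at h0
      rcases single i with h | h | h <;> rw [h] at h0 <;> exact absurd h0 (by decide)
  · rintro i ⟨hi1, hip⟩
    by_contra hlt
    push_neg at hlt
    interval_cases i
    · exact absurd (congrFun hip [1, 2]) (by decide)
    · exact absurd (congrFun hip [1, 2]) (by decide)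
    · exact absurd (congrFun hip [0, 0, 2]) (by decide)
    · exact absurd (congrFun hip [0, 0, 2]) (by decide)
    · exact absurd (congrFun hip [0, 0, 2]) (by decide)
    · exact absurd (congrFun hip [1, 2, 1]) (by decide)
    · exact absurd (congrFun hip [1, 2, 1]) (by decide)

end AutHier
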